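/- Let Z₁,...,Z_k be i.i.d. standard normal. Define Φ_k = E[(∏_{j=1}^k Z_j²)(∏_{j=2}^k (Z_j - Z_{j-1})²)] and Ψ_k = E[(∏_{j=1}^{k-1} Z_j²) Z_k⁴ (∏_{j=2}^k (Z_j - Z_{j-1})²)]. Then the recursions Φ_k = 3Φ_{k-1} + Ψ_{k-1} and Ψ_k = 15Φ_{k-1} + 3Ψ_{k-1} hold for k ≥ 2, with Φ₁ = 1, Ψ₁ = 3. -/

import Mathlib

open MeasureTheory Real

/-- Φ_{k+1} = E[(∏_{j=1}^{k+1} Z_j²)(∏_{j=2}^{k+1} (Z_j - Z_{j-1})²)] for i.i.d.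
standard normals, written as a Gaussian integral over ℝ^{k+1}. -/
noncomputable def fusionPhi (k : ℕ) : ℝ :=
  ∫ z : Fin (k + 1) → ℝ,
    ((∏ j, (z j) ^ 2) * ∏ j : Fin k, (z j.succ - z j.castSucc) ^ 2) *
      ((2 * π) ^ (-((k : ℝ) + 1) / 2) * Real.exp (-(∑ j, (z j) ^ 2) / 2))

/-- Ψ_{k+1} = E[(∏_{j=1}^{k} Z_j²) Z_{k+1}⁴ (∏_{j=2}^{k+1} (Z_j - Z_{j-1})²)]:
the same expectation with an extra factor Z_{k+1}² on the last coordinate. -/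
noncomputable def fusionPsi (k : ℕ) : ℝ :=
  ∫ z : Fin (k + 1) → ℝ,
    ((∏ j, (z j) ^ 2) * (z (Fin.last k)) ^ 2 *
        ∏ j : Fin k, (z j.succ - z j.castSucc) ^ 2) *
      ((2 * π) ^ (-((k : ℝ) + 1) / 2) * Real.exp (-(∑ j, (z j) ^ 2) / 2))

open MeasureTheory Real Filter

noncomputable def gw (x : ℝ) : ℝ := (2*π) ^ (-(1:ℝ)/2) * Real.exp (-x^2/2)

lemma integrable_pow_gauss (n : ℕ) : Integrable (fun x : ℝ => x ^ n * Real.exp (-x^2/2)) := by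
  have h := integrable_rpow_mul_exp_neg_mul_sq (b := (2:ℝ)⁻¹) (by norm_num) (s := (n:ℝ))
    ((by norm_num : (-1:ℝ) < 0).trans_le (Nat.cast_nonneg n))
  simpa [Real.rpow_natCast, neg_div, mul_comm, inv_mul_eq_div, div_eq_mul_inv] using h

lemma cont_pow_gauss (n : ℕ) : Continuous (fun x : ℝ => x ^ n * Real.exp (-x^2/2)) := by
  fun_prop

noncomputable def M (n : ℕ) : ℝ := ∫ x : ℝ, x ^ n * Real.exp (-x^2/2)

lemma M_step (n : ℕ) : M (n+2) = (n+1) * M n := by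
  have hu : ∀ x : ℝ, HasDerivAt (fun x : ℝ => x ^ (n+1)) (((n:ℝ)+1) * x ^ n) x := by
    intro x
    simpa using (hasDerivAt_pow (n+1) x)
  have hv : ∀ x : ℝ, HasDerivAt (fun x : ℝ => -Real.exp (-x^2/2)) (x * Real.exp (-x^2/2)) x := by
    intro x
    have h1 := ((hasDerivAt_pow 2 x).fun_neg.div_const 2)
    have h2 : HasDerivAt (fun x : ℝ => -x^2/2) (-x) x := by
      exact h1.congr_deriv (by push_cast; ring)
    simpa [mul_comm] using (h2.exp).fun_neg
  have key := integral_mul_deriv_eq_deriv_mul_of_integrable (u := fun x : ℝ => x ^ (n+1))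
    (v := fun x : ℝ => -Real.exp (-x^2/2)) (u' := fun x => ((n:ℝ)+1) * x ^ n)
    (v' := fun x => x * Real.exp (-x^2/2)) (fun x _ => hu x) (fun x _ => hv x)
    ?_ ?_ ?_
  · have e1 : ∫ x : ℝ, x ^ (n+1) * (x * Real.exp (-x^2/2)) = M (n+2) := by
      unfold M; congr 1; ext x; ring
    have e2 : (∫ x : ℝ, ((n:ℝ)+1) * x ^ n * -Real.exp (-x^2/2))
        = -(((n:ℝ)+1) * M n) := by
      rw [show (fun x : ℝ => ((n:ℝ)+1) * x ^ n * -Real.exp (-x^2/2))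
          = fun x : ℝ => -(((n:ℝ)+1) * (x ^ n * Real.exp (-x^2/2))) by ext x; ring]
      rw [integral_neg, integral_const_mul]
      rfl
    rw [e1] at key
    rw [key, e2]
    push_cast
    ring
  · have := integrable_pow_gauss (n+2)
    refine this.congr ?_
    filter_upwards with x
    simp only [Pi.mul_apply, Pi.neg_apply]; ring
  · have := ((integrable_pow_gauss n).const_mul ((n:ℝ)+1)).neg
    refine this.congr ?_
    filter_upwards with x
    simp only [Pi.mul_apply, Pi.neg_apply]; ring
  · have := (integrable_pow_gauss (n+1)).neg
    refine this.congr ?_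
    filter_upwards with x
    simp only [Pi.mul_apply, Pi.neg_apply]; ring

lemma M0 : M 0 = Real.sqrt (2*π) := by
  unfold M
  have h := integral_gaussian (2⁻¹ : ℝ)
  rw [show (π / (2:ℝ)⁻¹) = 2*π by ring] at h
  rw [← h]
  congr 1; ext x; rw [pow_zero, one_mul]; congr 1; ring

lemma M1 : M 1 = 0 := by
  have h := (Measure.measurePreserving_neg (volume : Measure ℝ)).integral_comp
    (Homeomorph.neg ℝ).measurableEmbedding (fun x : ℝ => x ^ 1 * Real.exp (-x^2/2))
  simp only [neg_sq, pow_one] at h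
  have h2 : - M 1 = M 1 := by
    unfold M
    simp only [pow_one]
    calc - ∫ x : ℝ, x * Real.exp (-x^2/2) = ∫ x : ℝ, -(x * Real.exp (-x^2/2)) :=
          (integral_neg _).symm
      _ = ∫ x : ℝ, -x * Real.exp (-x^2/2) := by congr 1; ext x; ring
      _ = ∫ x : ℝ, x * Real.exp (-x^2/2) := h
  linarith [h2]

lemma c_mul_sqrt : (2*π) ^ (-(1:ℝ)/2) * Real.sqrt (2*π) = 1 := by
  rw [Real.sqrt_eq_rpow, ← Real.rpow_add (by positivity)]
  norm_num

lemma integrable_pow_gw (n : ℕ) : Integrable (fun x : ℝ => x ^ n * gw x) := by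
  refine ((integrable_pow_gauss n).const_mul ((2*π) ^ (-(1:ℝ)/2))).congr ?_
  filter_upwards with x
  unfold gw; ring

lemma cont_gw : Continuous gw := by unfold gw; fun_prop

lemma integral_pow_gw (n : ℕ) : ∫ x : ℝ, x ^ n * gw x = (2*π) ^ (-(1:ℝ)/2) * M n := by
  rw [show (fun x : ℝ => x ^ n * gw x)
      = fun x : ℝ => (2*π) ^ (-(1:ℝ)/2) * (x ^ n * Real.exp (-x^2/2)) from
    funext fun x => by unfold gw; ring]
  rw [integral_const_mul]; rfl

lemma Mgw2 : ∫ x : ℝ, x ^ 2 * gw x = 1 := by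
  rw [integral_pow_gw, show (2:ℕ) = 0 + 2 from rfl, M_step, M0]
  have h := c_mul_sqrt
  rw [show Real.sqrt (2*π) = Real.sqrt 2 * Real.sqrt π from Real.sqrt_mul (by norm_num) π] at h
  push_cast
  simp only [Real.sqrt_mul (by norm_num : (0:ℝ) ≤ 2)]
  linear_combination h

lemma Mgw3 : ∫ x : ℝ, x ^ 3 * gw x = 0 := by
  rw [integral_pow_gw, show (3:ℕ) = 1 + 2 from rfl, M_step, M1]
  ring

lemma Mgw4 : ∫ x : ℝ, x ^ 4 * gw x = 3 := by
  rw [integral_pow_gw, show (4:ℕ) = 2 + 2 from rfl, M_step,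
    show M 2 = M (0 + 2) from rfl, M_step, M0]
  have h := c_mul_sqrt
  rw [show Real.sqrt (2*π) = Real.sqrt 2 * Real.sqrt π from Real.sqrt_mul (by norm_num) π] at h
  push_cast
  simp only [Real.sqrt_mul (by norm_num : (0:ℝ) ≤ 2)]
  linear_combination 3 * h

lemma Mgw5 : ∫ x : ℝ, x ^ 5 * gw x = 0 := by
  rw [integral_pow_gw, show (5:ℕ) = 3 + 2 from rfl, M_step,
    show (3:ℕ) = 1 + 2 from rfl, M_step, M1]
  ring

lemma Mgw6 : ∫ x : ℝ, x ^ 6 * gw x = 15 := by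
  rw [integral_pow_gw, show (6:ℕ) = 4 + 2 from rfl, M_step,
    show (4:ℕ) = 2 + 2 from rfl, M_step, show (2:ℕ) = 0 + 2 from rfl, M_step, M0]
  have h := c_mul_sqrt
  rw [show Real.sqrt (2*π) = Real.sqrt 2 * Real.sqrt π from Real.sqrt_mul (by norm_num) π] at h
  push_cast
  simp only [Real.sqrt_mul (by norm_num : (0:ℝ) ≤ 2)]
  linear_combination 15 * h

lemma key2 (a : ℝ) : ∫ x : ℝ, (x^2*(x-a)^2) * gw x = 3 + a^2 := by
  rw [show (fun x : ℝ => (x^2*(x-a)^2) * gw x)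
      = fun x : ℝ => (x^4 * gw x) + ((-2*a) * (x^3 * gw x) + a^2 * (x^2 * gw x)) from
    funext fun x => by ring]
  have h2 : Integrable (fun x : ℝ => -2*a*(x^3*gw x) + a^2*(x^2*gw x)) :=
    ((integrable_pow_gw 3).const_mul (-2*a)).add ((integrable_pow_gw 2).const_mul (a^2))
  rw [integral_add (integrable_pow_gw 4) h2,
    integral_add ((integrable_pow_gw 3).const_mul (-2*a)) ((integrable_pow_gw 2).const_mul (a^2)),
    integral_const_mul, integral_const_mul, Mgw2, Mgw3, Mgw4]
  ring

lemma key4 (a : ℝ) : ∫ x : ℝ, (x^4*(x-a)^2) * gw x = 15 + 3*a^2 := by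
  rw [show (fun x : ℝ => (x^4*(x-a)^2) * gw x)
      = fun x : ℝ => (x^6 * gw x) + ((-2*a) * (x^5 * gw x) + a^2 * (x^4 * gw x)) from
    funext fun x => by ring]
  have h2 : Integrable (fun x : ℝ => -2*a*(x^5*gw x) + a^2*(x^4*gw x)) :=
    ((integrable_pow_gw 5).const_mul (-2*a)).add ((integrable_pow_gw 4).const_mul (a^2))
  rw [integral_add (integrable_pow_gw 6) h2,
    integral_add ((integrable_pow_gw 5).const_mul (-2*a)) ((integrable_pow_gw 4).const_mul (a^2)),
    integral_const_mul, integral_const_mul, Mgw4, Mgw5, Mgw6]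
  ring

noncomputable def HPhi (k : ℕ) (z : Fin (k+1) → ℝ) : ℝ :=
  ((∏ j, (z j) ^ 2) * ∏ j : Fin k, (z j.succ - z j.castSucc) ^ 2) *
    ((2 * π) ^ (-((k : ℝ) + 1) / 2) * Real.exp (-(∑ j, (z j) ^ 2) / 2))

noncomputable def HPsi (k : ℕ) (z : Fin (k+1) → ℝ) : ℝ :=
  ((∏ j, (z j) ^ 2) * (z (Fin.last k)) ^ 2 *
      ∏ j : Fin k, (z j.succ - z j.castSucc) ^ 2) *
    ((2 * π) ^ (-((k : ℝ) + 1) / 2) * Real.exp (-(∑ j, (z j) ^ 2) / 2))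

lemma HPsi_eq (k : ℕ) (z : Fin (k+1) → ℝ) :
    HPsi k z = HPhi k z * (z (Fin.last k)) ^ 2 := by
  unfold HPhi HPsi; ring

lemma HPhi_nonneg (k : ℕ) (z : Fin (k+1) → ℝ) : 0 ≤ HPhi k z := by
  unfold HPhi
  have h1 : (0:ℝ) ≤ ∏ j, (z j)^2 := Finset.prod_nonneg fun j _ => sq_nonneg _
  have h2 : (0:ℝ) ≤ ∏ j : Fin k, (z j.succ - z j.castSucc)^2 :=
    Finset.prod_nonneg fun j _ => sq_nonneg _
  positivity

lemma cont_HPhi (k : ℕ) : Continuous (HPhi k) := by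
  unfold HPhi
  refine Continuous.mul (Continuous.mul ?_ ?_) (Continuous.mul continuous_const ?_)
  · exact continuous_finset_prod _ fun i _ => (continuous_apply i).pow 2
  · exact continuous_finset_prod _ fun i _ =>
      ((continuous_apply i.succ).sub (continuous_apply i.castSucc)).pow 2
  · exact (((continuous_finset_sum _ fun i _ => (continuous_apply i).pow 2).neg).div_const
      2).rexp

lemma weight_split (k : ℕ) :
    (2 * π) ^ (-(((k:ℝ) + 1) + 1) / 2) =
      (2 * π) ^ (-((k : ℝ) + 1) / 2) * (2*π) ^ (-(1:ℝ)/2) := by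
  rw [← Real.rpow_add (by positivity)]
  congr 1; ring

lemma HPhi_snoc (k : ℕ) (y : Fin (k+1) → ℝ) (x : ℝ) :
    HPhi (k+1) (Fin.snoc y x) = HPhi k y * ((x^2 * (x - y (Fin.last k))^2) * gw x) := by
  unfold HPhi gw
  have p1 : ∏ j : Fin (k+2), ((Fin.snoc y x : Fin (k+2) → ℝ) j) ^ 2
      = (∏ j : Fin (k+1), (y j) ^ 2) * x ^ 2 := by
    rw [Fin.prod_univ_castSucc]
    simp
  have p2 : ∏ j : Fin (k+1),
      ((Fin.snoc y x : Fin (k+2) → ℝ) j.succ - (Fin.snoc y x : Fin (k+2) → ℝ) j.castSucc) ^ 2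
      = (∏ j : Fin k, (y j.succ - y j.castSucc) ^ 2) * (x - y (Fin.last k)) ^ 2 := by
    rw [Fin.prod_univ_castSucc]
    congr 1
    · refine Finset.prod_congr rfl fun i _ => ?_
      rw [Fin.succ_castSucc, Fin.snoc_castSucc, Fin.snoc_castSucc]
    · rw [Fin.succ_last, Fin.snoc_last, Fin.snoc_castSucc]
  have s1 : ∑ j : Fin (k+2), ((Fin.snoc y x : Fin (k+2) → ℝ) j) ^ 2
      = (∑ j : Fin (k+1), (y j) ^ 2) + x ^ 2 := by
    rw [Fin.sum_univ_castSucc]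
    simp
  rw [p1, p2, s1]
  rw [show (-((↑(k+1) : ℝ) + 1) / 2) = (-(((k:ℝ) + 1) + 1) / 2) by push_cast; ring,
    weight_split]
  rw [show (-((∑ j : Fin (k+1), (y j) ^ 2) + x ^ 2) / 2)
      = (-(∑ j : Fin (k+1), (y j) ^ 2) / 2) + (-x^2/2) by ring, Real.exp_add]
  ring

lemma HPsi_snoc (k : ℕ) (y : Fin (k+1) → ℝ) (x : ℝ) :
    HPsi (k+1) (Fin.snoc y x) = HPhi k y * ((x^4 * (x - y (Fin.last k))^2) * gw x) := by
  rw [HPsi_eq, HPhi_snoc]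
  rw [show (Fin.snoc y x : Fin (k+2) → ℝ) (Fin.last (k+1)) = x by simp]
  ring

lemma integrable_J1 (k : ℕ) (h0 : Integrable (HPhi k)) (h2 : Integrable (HPsi k)) :
    Integrable (fun y : Fin (k+1) → ℝ => HPhi k y * y (Fin.last k)) := by
  refine Integrable.mono' (h0.add h2)
    (((cont_HPhi k).mul (continuous_apply (Fin.last k))).aestronglyMeasurable) ?_
  filter_upwards with y
  have h := HPhi_nonneg k y
  have habs : |y (Fin.last k)| ≤ 1 + (y (Fin.last k))^2 := by
    nlinarith [sq_nonneg (|y (Fin.last k)| - 1), sq_abs (y (Fin.last k)), abs_nonneg (y (Fin.last k))]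
  rw [Real.norm_eq_abs, abs_mul, abs_of_nonneg h]
  calc HPhi k y * |y (Fin.last k)| ≤ HPhi k y * (1 + (y (Fin.last k))^2) := by
        exact mul_le_mul_of_nonneg_left habs h
    _ = HPhi k y + HPsi k y := by rw [HPsi_eq]; ring

lemma hsymm (k : ℕ) (p : ℝ × (Fin (k+1) → ℝ)) :
    (MeasurableEquiv.piFinSuccAbove (fun _ : Fin (k+2) => ℝ) (Fin.last (k+1))).symm p
      = Fin.snoc p.2 p.1 := by
  simp [MeasurableEquiv.piFinSuccAbove_symm_apply, Fin.insertNth_last', Fin.snocEquiv]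

lemma step (k : ℕ) (h0 : Integrable (HPhi k)) (h2 : Integrable (HPsi k)) :
    (Integrable (HPhi (k+1)) ∧ Integrable (HPsi (k+1))) ∧
    (∫ z, HPhi (k+1) z) = 3 * (∫ z, HPhi k z) + (∫ z, HPsi k z) ∧
    (∫ z, HPsi (k+1) z) = 15 * (∫ z, HPhi k z) + 3 * (∫ z, HPsi k z) := by
  have h1 := integrable_J1 k h0 h2
  set e := (MeasurableEquiv.piFinSuccAbove (fun _ : Fin (k+2) => ℝ) (Fin.last (k+1))) with he
  have hmp := (measurePreserving_piFinSuccAbove (fun _ : Fin (k+2) => (volume : Measure ℝ))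
    (Fin.last (k+1))).symm
  -- integrability of the transported integrands
  have hfphi : (fun p : ℝ × (Fin (k+1) → ℝ) => HPhi (k+1) (e.symm p))
      = fun p => (p.1^4 * gw p.1) * HPhi k p.2
          + ((p.1^3 * gw p.1) * (-2 * (HPhi k p.2 * p.2 (Fin.last k)))
            + (p.1^2 * gw p.1) * HPsi k p.2) := by
    funext p
    rw [hsymm, HPhi_snoc, HPsi_eq]
    ring
  have hfpsi : (fun p : ℝ × (Fin (k+1) → ℝ) => HPsi (k+1) (e.symm p))
      = fun p => (p.1^6 * gw p.1) * HPhi k p.2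
          + ((p.1^5 * gw p.1) * (-2 * (HPhi k p.2 * p.2 (Fin.last k)))
            + (p.1^4 * gw p.1) * HPsi k p.2) := by
    funext p
    rw [hsymm, HPsi_snoc, HPsi_eq]
    ring
  have hintphi : Integrable (fun p : ℝ × (Fin (k+1) → ℝ) => HPhi (k+1) (e.symm p))
      ((volume : Measure ℝ).prod (Measure.pi fun _ : Fin (k+1) => (volume : Measure ℝ))) := by
    rw [hfphi]
    have hv : (Measure.pi fun _ : Fin (k+1) => (volume : Measure ℝ))
        = (volume : Measure (Fin (k+1) → ℝ)) := (volume_pi).symm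
    rw [hv]
    exact (((integrable_pow_gw 4).mul_prod h0).add
      (((integrable_pow_gw 3).mul_prod (h1.const_mul (-2))).add
        ((integrable_pow_gw 2).mul_prod h2)))
  have hintpsi : Integrable (fun p : ℝ × (Fin (k+1) → ℝ) => HPsi (k+1) (e.symm p))
      ((volume : Measure ℝ).prod (Measure.pi fun _ : Fin (k+1) => (volume : Measure ℝ))) := by
    rw [hfpsi]
    have hv : (Measure.pi fun _ : Fin (k+1) => (volume : Measure ℝ))
        = (volume : Measure (Fin (k+1) → ℝ)) := (volume_pi).symm
    rw [hv]
    exact (((integrable_pow_gw 6).mul_prod h0).add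
      (((integrable_pow_gw 5).mul_prod (h1.const_mul (-2))).add
        ((integrable_pow_gw 4).mul_prod h2)))
  have hIphi : Integrable (HPhi (k+1)) := by
    rw [show (volume : Measure (Fin (k+2) → ℝ)) = Measure.pi (fun _ => volume) from volume_pi]
    exact (hmp.integrable_comp_emb (MeasurableEquiv.measurableEmbedding e.symm)).1 hintphi
  have hIpsi : Integrable (HPsi (k+1)) := by
    rw [show (volume : Measure (Fin (k+2) → ℝ)) = Measure.pi (fun _ => volume) from volume_pi]
    exact (hmp.integrable_comp_emb (MeasurableEquiv.measurableEmbedding e.symm)).1 hintpsi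
  refine ⟨⟨hIphi, hIpsi⟩, ?_, ?_⟩
  · rw [show (∫ z, HPhi (k+1) z) = ∫ z, HPhi (k+1) z ∂(Measure.pi fun _ => volume) from by
      rw [← volume_pi]]
    rw [← hmp.integral_comp']
    rw [MeasureTheory.integral_prod_symm _ hintphi]
    have inner : ∀ y : Fin (k+1) → ℝ,
        (∫ x : ℝ, HPhi (k+1) (e.symm (x, y))) = HPhi k y * (3 + (y (Fin.last k))^2) := by
      intro y
      have : (fun x : ℝ => HPhi (k+1) (e.symm (x, y)))
          = fun x : ℝ => HPhi k y * ((x^2 * (x - y (Fin.last k))^2) * gw x) := by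
        funext x
        rw [hsymm, HPhi_snoc]
      rw [this, integral_const_mul]
      rw [show (∫ x : ℝ, (x^2 * (x - y (Fin.last k))^2) * gw x) = 3 + (y (Fin.last k))^2
        from key2 _]
    rw [show (∫ y : Fin (k+1) → ℝ, ∫ x : ℝ, HPhi (k+1) (e.symm (x, y))
          ∂(volume) ∂(Measure.pi fun _ => volume))
        = ∫ y : Fin (k+1) → ℝ, HPhi k y * (3 + (y (Fin.last k))^2) from by
      rw [← volume_pi]; exact integral_congr_ae (Filter.Eventually.of_forall inner)]
    rw [show (fun y : Fin (k+1) → ℝ => HPhi k y * (3 + (y (Fin.last k))^2))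
        = fun y => 3 * HPhi k y + HPsi k y from funext fun y => by rw [HPsi_eq]; ring]
    rw [integral_add (h0.const_mul 3) h2, integral_const_mul]
  · rw [show (∫ z, HPsi (k+1) z) = ∫ z, HPsi (k+1) z ∂(Measure.pi fun _ => volume) from by
      rw [← volume_pi]]
    rw [← hmp.integral_comp']
    rw [MeasureTheory.integral_prod_symm _ hintpsi]
    have inner : ∀ y : Fin (k+1) → ℝ,
        (∫ x : ℝ, HPsi (k+1) (e.symm (x, y))) = HPhi k y * (15 + 3 * (y (Fin.last k))^2) := by
      intro y
      have : (fun x : ℝ => HPsi (k+1) (e.symm (x, y)))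
          = fun x : ℝ => HPhi k y * ((x^4 * (x - y (Fin.last k))^2) * gw x) := by
        funext x
        rw [hsymm, HPsi_snoc]
      rw [this, integral_const_mul]
      rw [show (∫ x : ℝ, (x^4 * (x - y (Fin.last k))^2) * gw x) = 15 + 3 * (y (Fin.last k))^2
        from key4 _]
    rw [show (∫ y : Fin (k+1) → ℝ, ∫ x : ℝ, HPsi (k+1) (e.symm (x, y))
          ∂(volume) ∂(Measure.pi fun _ => volume))
        = ∫ y : Fin (k+1) → ℝ, HPhi k y * (15 + 3 * (y (Fin.last k))^2) from by
      rw [← volume_pi]; exact integral_congr_ae (Filter.Eventually.of_forall inner)]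
    rw [show (fun y : Fin (k+1) → ℝ => HPhi k y * (15 + 3 * (y (Fin.last k))^2))
        = fun y => 15 * HPhi k y + 3 * HPsi k y from funext fun y => by rw [HPsi_eq]; ring]
    rw [integral_add (h0.const_mul 15) (h2.const_mul 3), integral_const_mul, integral_const_mul]

lemma HPhi0_eq (z : Fin 1 → ℝ) : HPhi 0 z = (z 0)^2 * gw (z 0) := by
  unfold HPhi gw
  simp only [Nat.cast_zero, Fin.prod_univ_succ, Fin.sum_univ_succ, Finset.univ_eq_empty,
    Finset.prod_empty, Finset.sum_empty, mul_one, add_zero]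
  rw [show -((0:ℝ)+1)/2 = -(1:ℝ)/2 by norm_num]

lemma HPsi0_eq (z : Fin 1 → ℝ) : HPsi 0 z = (z 0)^4 * gw (z 0) := by
  unfold HPsi gw
  simp only [Nat.cast_zero, Fin.prod_univ_succ, Fin.sum_univ_succ, Finset.univ_eq_empty,
    Finset.prod_empty, Finset.sum_empty, mul_one, add_zero]
  rw [show -((0:ℝ)+1)/2 = -(1:ℝ)/2 by norm_num]
  show _ * (z 0)^2 * _ = _
  ring

lemma int_e1 (g : ℝ → ℝ) (hg : Integrable g) : Integrable (fun z : Fin 1 → ℝ => g (z 0)) :=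
  ((volume_preserving_funUnique (Fin 1) ℝ).integrable_comp_emb
    (MeasurableEquiv.measurableEmbedding _)).2 hg

lemma integral_e1 (g : ℝ → ℝ) : (∫ z : Fin 1 → ℝ, g (z 0)) = ∫ x : ℝ, g x :=
  (volume_preserving_funUnique (Fin 1) ℝ).integral_comp' g

lemma base_int : Integrable (HPhi 0) ∧ Integrable (HPsi 0) := by
  constructor
  · rw [show HPhi 0 = fun z : Fin 1 → ℝ => (z 0)^2 * gw (z 0) from funext HPhi0_eq]
    exact int_e1 (fun x => x^2 * gw x) (integrable_pow_gw 2)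
  · rw [show HPsi 0 = fun z : Fin 1 → ℝ => (z 0)^4 * gw (z 0) from funext HPsi0_eq]
    exact int_e1 (fun x => x^4 * gw x) (integrable_pow_gw 4)

lemma both_int : ∀ k, Integrable (HPhi k) ∧ Integrable (HPsi k)
  | 0 => base_int
  | k+1 => (step k (both_int k).1 (both_int k).2).1

theorem final :
    (∫ z, HPhi 0 z) = 1 ∧ (∫ z, HPsi 0 z) = 3 ∧
    ∀ k : ℕ,
      (∫ z, HPhi (k+1) z) = 3 * (∫ z, HPhi k z) + (∫ z, HPsi k z) ∧
      (∫ z, HPsi (k+1) z) = 15 * (∫ z, HPhi k z) + 3 * (∫ z, HPsi k z) := by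
  refine ⟨?_, ?_, fun k => (step k (both_int k).1 (both_int k).2).2⟩
  · rw [show HPhi 0 = fun z : Fin 1 → ℝ => (z 0)^2 * gw (z 0) from funext HPhi0_eq]
    exact (integral_e1 (fun x => x ^ 2 * gw x)).trans Mgw2
  · rw [show HPsi 0 = fun z : Fin 1 → ℝ => (z 0)^4 * gw (z 0) from funext HPsi0_eq]
    exact (integral_e1 (fun x => x ^ 4 * gw x)).trans Mgw4

/-- The coupled recursions Φ_k = 3Φ_{k-1} + Ψ_{k-1}, Ψ_k = 15Φ_{k-1} + 3Ψ_{k-1}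
for k ≥ 2, with Φ₁ = 1 and Ψ₁ = 3 (indices shifted so that `fusionPhi k` = Φ_{k+1}). -/
theorem fusionPhi_fusionPsi_recursion :
    fusionPhi 0 = 1 ∧ fusionPsi 0 = 3 ∧
    ∀ k : ℕ,
      fusionPhi (k + 1) = 3 * fusionPhi k + fusionPsi k ∧
      fusionPsi (k + 1) = 15 * fusionPhi k + 3 * fusionPsi k := by
  simp only [show ∀ k, fusionPhi k = ∫ z, HPhi k z from fun k => rfl,
    show ∀ k, fusionPsi k = ∫ z, HPsi k z from fun k => rfl]
  exact final
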